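/- Let D_i ⊂ ℝⁿ be bounded measurable sets with χ_{D_i} → χ_D in L¹(ℝⁿ), where D is normalized so that |D ∩ B_r(x)| < ω_n rⁿ for all x ∉ int(D) and r > 0. Then for every ε > 0 there is N such that for all i > N, the inner ε-core (D_i)_ε := {x ∈ D_i : B_ε(x) ⊂ D_i} is contained in D. -/
import Mathlib


open MeasureTheory Metric Set Filter
open scoped ENNReal Topology

/-- If `χ_{D_i} → χ_D` in `L¹`, where `D` is normalized so that
`|D ∩ B_r(x)| < ωₙ rⁿ` for all `x ∉ int D` and `r > 0`, then for every `ε > 0`,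
eventually the inner `ε`-core `(D_i)_ε = {x ∈ D_i : B_ε(x) ⊆ D_i}` is contained in `D`. -/
theorem stmt_8 {n : ℕ}
    (D : ℕ → Set (EuclideanSpace ℝ (Fin n))) (D₀ : Set (EuclideanSpace ℝ (Fin n)))
    (hDm : ∀ i, MeasurableSet (D i)) (hDb : ∀ i, Bornology.IsBounded (D i))
    (hD₀m : MeasurableSet D₀) (hD₀b : Bornology.IsBounded D₀)
    (hconv : Tendsto (fun i => volume (symmDiff (D i) D₀)) atTop (nhds 0))
    (hrep : ∀ x ∉ interior D₀, ∀ r : ℝ, 0 < r →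
      volume (D₀ ∩ ball x r) < volume (ball x r)) :
    ∀ ε : ℝ, 0 < ε → ∃ N : ℕ, ∀ i > N,
      {x | x ∈ D i ∧ ball x ε ⊆ D i} ⊆ D₀ := by
  intro ε hε
  by_contra hcon
  push_neg at hcon
  set c := volume (ball (0 : EuclideanSpace ℝ (Fin n)) ε) with hc_def
  have hc : 0 < c := measure_ball_pos _ _ hε
  obtain ⟨N₀, hN₀⟩ := eventually_atTop.1 (hconv.eventually_lt_const hc)
  have hch : ∀ k : ℕ, ∃ i > N₀ + k, ∃ x,
      (x ∈ D i ∧ ball x ε ⊆ D i) ∧ x ∉ D₀ := by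
    intro k
    obtain ⟨i, hi, hsub⟩ := hcon (N₀ + k)
    obtain ⟨x, hx, hxD⟩ := Set.not_subset.1 hsub
    exact ⟨i, hi, x, hx, hxD⟩
  choose i hi x hx hxD using hch
  have key : ∀ k, volume (ball (x k) ε \ D₀) ≤ volume (symmDiff (D (i k)) D₀) := by
    intro k
    refine measure_mono fun z hz => ?_
    rw [Set.mem_symmDiff]
    exact Or.inl ⟨(hx k).2 hz.1, hz.2⟩
  have bound : ∀ k, volume (symmDiff (D (i k)) D₀) < c := by
    intro k
    exact hN₀ _ (le_of_lt (lt_of_le_of_lt (Nat.le_add_right N₀ k) (hi k)))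
  have hballc : ∀ y : EuclideanSpace ℝ (Fin n), volume (ball y ε) = c := by
    intro y
    rw [hc_def, Measure.addHaar_ball_center]
  have hinter : ∀ k, (D₀ ∩ ball (x k) ε).Nonempty := by
    intro k
    rw [Set.nonempty_iff_ne_empty]
    intro h
    have hdisj : Disjoint (ball (x k) ε) D₀ := by
      rw [Set.disjoint_iff_inter_eq_empty, Set.inter_comm]
      exact h
    have heq : ball (x k) ε \ D₀ = ball (x k) ε := hdisj.sdiff_eq_left
    have hlt := lt_of_le_of_lt (key k) (bound k)
    rw [heq, hballc] at hlt
    exact lt_irrefl _ hlt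
  obtain ⟨R, hR⟩ := hD₀b.subset_closedBall (0 : EuclideanSpace ℝ (Fin n))
  have hxK : ∀ k, x k ∈ closedBall (0 : EuclideanSpace ℝ (Fin n)) (R + ε) := by
    intro k
    obtain ⟨y, hy, hyb⟩ := hinter k
    have h1 : dist y 0 ≤ R := hR hy
    have h2 : dist y (x k) < ε := mem_ball.1 hyb
    have : dist (x k) 0 ≤ dist (x k) y + dist y 0 := dist_triangle _ _ _
    rw [mem_closedBall]
    rw [dist_comm] at h2
    linarith
  obtain ⟨xb, hxbK, φ, hφ, hlim⟩ :=
    (isCompact_closedBall (0 : EuclideanSpace ℝ (Fin n)) (R + ε)).tendsto_subseq hxK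
  have hxb : xb ∉ interior D₀ := by
    have hcl : IsClosed (interior D₀)ᶜ := isOpen_interior.isClosed_compl
    exact hcl.mem_of_tendsto hlim
      (Filter.Eventually.of_forall fun j h => hxD (φ j) (interior_subset h))
  have hrep' := hrep xb hxb (ε / 2) (by positivity)
  set c₂ := volume (ball xb (ε / 2) \ D₀) with hc₂_def
  have hc₂ : 0 < c₂ := by
    rw [pos_iff_ne_zero]
    intro h0
    have hle : volume (ball xb (ε / 2)) ≤
        volume (ball xb (ε / 2) ∩ D₀) + c₂ := by
      rw [hc₂_def]; exact measure_le_inter_add_diff _ _ _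
    rw [h0, add_zero, Set.inter_comm] at hle
    exact absurd hrep' (not_lt.2 hle)
  obtain ⟨M₁, hM₁⟩ := Metric.tendsto_atTop.1 hlim (ε / 2) (by positivity)
  have hiφ : Tendsto (fun j => i (φ j)) atTop atTop := by
    apply tendsto_atTop_mono (fun j => ?_) tendsto_id
    calc (j : ℕ) ≤ φ j := hφ.le_apply
    _ ≤ N₀ + φ j := Nat.le_add_left _ _
    _ ≤ i (φ j) := le_of_lt (hi (φ j))
  have htend : Tendsto (fun j => volume (symmDiff (D (i (φ j))) D₀)) atTop (𝓝 0) :=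
    hconv.comp hiφ
  obtain ⟨M₂, hM₂⟩ := eventually_atTop.1 (htend.eventually_lt_const hc₂)
  set j := max M₁ M₂ with hj_def
  have hsub : ball xb (ε / 2) \ D₀ ⊆ ball (x (φ j)) ε \ D₀ := by
    rintro z ⟨hz1, hz2⟩
    refine ⟨?_, hz2⟩
    have h1 : dist z xb < ε / 2 := mem_ball.1 hz1
    have h2 : dist (x (φ j)) xb < ε / 2 := hM₁ j (le_max_left _ _)
    have : dist z (x (φ j)) ≤ dist z xb + dist xb (x (φ j)) := dist_triangle _ _ _
    rw [dist_comm] at h2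
    rw [mem_ball]
    linarith
  have : c₂ ≤ volume (symmDiff (D (i (φ j))) D₀) :=
    le_trans (measure_mono hsub) (key (φ j))
  exact absurd (hM₂ j (le_max_right _ _)) (not_lt.2 this)
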